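/- arXiv:1009.3283 — 2 statements merged into one kernel-verified Lean document; each statement's English description precedes it below -/
import Mathlib

section
/- Let α ∈ gl(n,ℝ) be a diagonal matrix with rational entries a₁ ≤ a₂ ≤ … ≤ aₙ. Then the set {X ∈ gl(n,ℝ) : [X,α] = 0 and tr(Xα) = 0} is a Lie subalgebra of gl(n,ℝ), and it is the Lie algebra of the group {g ∈ GL(n,ℝ) : gα = αg and Π det(g_i)^{q a_i} = 1}, where the g_i are the diagonal blocks of g corresponding to the eigenspaces of α and q is a common denominator of the a_i; in particular this group is a real algebraic subgroup of GL(n,ℝ). -/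
noncomputable section

open NormedSpace

namespace CTZAux

variable {ι : Type*} [Fintype ι] [DecidableEq ι]

noncomputable def entryCLM (i j : ι) : Matrix (ι) (ι) ℝ →L[ℝ] ℝ :=
  LinearMap.toContinuousLinearMap
    { toFun := fun A => A i j
      map_add' := fun _ _ => rfl
      map_smul' := fun _ _ => rfl }

lemma entry_hasDerivAt (M : Matrix (ι) (ι) ℝ) (i j : ι) :
    HasDerivAt (fun t : ℝ => exp (t • M) i j) (M i j) 0 := by
  letI : NormedRing (Matrix (ι) (ι) ℝ) := Matrix.linftyOpNormedRing
  letI : NormedAlgebra ℝ (Matrix (ι) (ι) ℝ) := Matrix.linftyOpNormedAlgebra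
  have h := hasDerivAt_exp_smul_const (𝕂 := ℝ) M (0 : ℝ)
  rw [zero_smul, exp_zero, one_mul] at h
  have h2 := (entryCLM i j).hasFDerivAt.comp_hasDerivAt (0 : ℝ) h
  exact h2

lemma det_exp_hasDerivAt_zero (M : Matrix (ι) (ι) ℝ) :
    HasDerivAt (fun t : ℝ => (exp (t • M)).det) M.trace 0 := by
  have hprod : ∀ σ : Equiv.Perm (ι),
      HasDerivAt (fun t : ℝ => ∏ i : ι, exp (t • M) (σ i) i)
        (if σ = 1 then M.trace else 0) 0 := by
    intro σ
    have h := HasDerivAt.fun_finsetProd (u := Finset.univ)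
      (f := fun i (t : ℝ) => exp (t • M) (σ i) i) (f' := fun i => M (σ i) i)
      (fun i _ => entry_hasDerivAt M (σ i) i)
    have hval : ∀ i : ι, ∀ j : ι, exp ((0:ℝ) • M) i j = (1 : Matrix (ι) (ι) ℝ) i j := by
      intro i j; rw [zero_smul, exp_zero]
    refine h.congr_deriv (Eq.symm ?_)
    rcases eq_or_ne σ 1 with rfl | hσ
    · simp only [if_pos rfl]
      rw [Matrix.trace]
      refine (Finset.sum_congr rfl fun i _ => ?_).symm
      have : ∀ j ∈ Finset.univ.erase i, exp ((0:ℝ) • M) ((1 : Equiv.Perm (ι)) j) j = 1 := by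
        intro j _; rw [hval]; simp [Matrix.one_apply]
      rw [Finset.prod_congr rfl this, Finset.prod_const_one, Equiv.Perm.one_apply]
      simp [Matrix.diag]
    · rw [if_neg hσ]
      refine (Finset.sum_eq_zero fun i _ => ?_).symm
      -- find a moved point different from i
      obtain ⟨a, ha⟩ : ∃ a, σ a ≠ a := by
        by_contra hc; push_neg at hc; exact hσ (Equiv.ext fun x => hc x)
      have hb : σ (σ a) ≠ σ a := fun hb => ha (σ.injective hb)
      obtain ⟨j, hj1, hj2⟩ : ∃ j, σ j ≠ j ∧ j ≠ i := by
        rcases eq_or_ne a i with rfl | hai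
        · exact ⟨σ a, hb, ha⟩
        · exact ⟨a, ha, hai⟩
      have : (∏ k ∈ Finset.univ.erase i, exp ((0:ℝ) • M) (σ k) k) = 0 := by
        refine Finset.prod_eq_zero (Finset.mem_erase.mpr ⟨hj2, Finset.mem_univ j⟩) ?_
        rw [hval]
        simp [Matrix.one_apply, hj1]
      rw [this, zero_smul]
  have hsum := HasDerivAt.fun_sum (u := Finset.univ)
    (A := fun (σ : Equiv.Perm (ι)) (t : ℝ) =>
        ((Equiv.Perm.sign σ : ℤ) : ℝ) * ∏ i : ι, exp (t • M) (σ i) i)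
    (A' := fun σ => ((Equiv.Perm.sign σ : ℤ) : ℝ) * (if σ = 1 then M.trace else 0))
    (fun σ _ => (hprod σ).const_mul _)
  have heq : (fun t : ℝ => (exp (t • M)).det)
      = fun t : ℝ => ∑ σ : Equiv.Perm (ι),
          ((Equiv.Perm.sign σ : ℤ) : ℝ) * ∏ i : ι, exp (t • M) (σ i) i := by
    funext t; rw [Matrix.det_apply']
  rw [heq]
  refine hsum.congr_deriv (Eq.symm ?_)
  rw [Finset.sum_eq_single (1 : Equiv.Perm (ι))]
  · simp
  · intro σ _ hσ; simp [hσ]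
  · simp


lemma det_exp_smul (M : Matrix (ι) (ι) ℝ) (t : ℝ) :
    (exp (t • M)).det = Real.exp (t * M.trace) := by
  have hshift : ∀ t₀ : ℝ,
      HasDerivAt (fun t : ℝ => (exp (t • M)).det) ((exp (t₀ • M)).det * M.trace) t₀ := by
    intro t₀
    have hfun : (fun t : ℝ => (exp (t • M)).det)
        = fun t : ℝ => (exp (t₀ • M)).det * (exp ((t - t₀) • M)).det := by
      funext u
      rw [← Matrix.det_mul, ← Matrix.exp_add_of_commute _ _
        (((Commute.refl M).smul_left t₀).smul_right (u - t₀))]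
      congr 1
      rw [← add_smul]
      ring_nf
    have h0 : HasDerivAt (fun t : ℝ => (exp ((t - t₀) • M)).det) M.trace t₀ := by
      have hin : HasDerivAt (fun t : ℝ => t - t₀) 1 t₀ := (hasDerivAt_id t₀).sub_const t₀
      have h00 : HasDerivAt (fun t : ℝ => (exp (t • M)).det) M.trace (t₀ - t₀) := by
        rw [sub_self]; exact det_exp_hasDerivAt_zero M
      have := HasDerivAt.comp (h := fun t : ℝ => t - t₀) t₀ h00 hin
      rw [mul_one] at this; exact this
    rw [hfun]
    exact h0.const_mul (exp (t₀ • M)).det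
  have hkey : ∀ u : ℝ, (exp (u • M)).det * Real.exp (-(u * M.trace)) = 1 := by
    have hd : ∀ u : ℝ, HasDerivAt
        (fun u : ℝ => (exp (u • M)).det * Real.exp (-(u * M.trace))) 0 u := by
      intro u
      have h2 : HasDerivAt (fun u : ℝ => Real.exp (-(u * M.trace)))
          (Real.exp (-(u * M.trace)) * (-M.trace)) u := by
        have hmul : HasDerivAt (fun u : ℝ => -(u * M.trace)) (-M.trace) u := by
          exact (hasDerivAt_mul_const (x := u) M.trace).neg
        exact (Real.hasDerivAt_exp _).comp u hmul
      have := (hshift u).mul h2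
      refine this.congr_deriv ?_
      ring
    have hconst := is_const_of_deriv_eq_zero
      (f := fun u : ℝ => (exp (u • M)).det * Real.exp (-(u * M.trace)))
      (fun u => (hd u).differentiableAt) (fun u => (hd u).deriv)
    intro u
    have := hconst u 0
    simpa using this
  have := hkey t
  rw [Real.exp_neg, mul_inv_eq_one₀ (Real.exp_ne_zero _)] at this
  exact this


section Blocks

variable {m : ℕ} (f : Fin m → ℤ)

/-- block-diagonal predicate -/
def IsBlk (X : Matrix (Fin m) (Fin m) ℝ) : Prop :=
  ∀ i j : Fin m, f i ≠ f j → X i j = 0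

variable {f}

lemma IsBlk.one : IsBlk f (1 : Matrix (Fin m) (Fin m) ℝ) := by
  intro i j hij
  exact Matrix.one_apply_ne (fun h => hij (by rw [h]))

lemma IsBlk.mul {X Y : Matrix (Fin m) (Fin m) ℝ} (hX : IsBlk f X) (hY : IsBlk f Y) :
    IsBlk f (X * Y) := by
  intro i j hij
  rw [Matrix.mul_apply]
  refine Finset.sum_eq_zero fun k _ => ?_
  rcases eq_or_ne (f i) (f k) with h | h
  · rw [hY k j (h ▸ hij), mul_zero]
  · rw [hX i k h, zero_mul]

lemma IsBlk.pow {X : Matrix (Fin m) (Fin m) ℝ} (hX : IsBlk f X) (k : ℕ) :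
    IsBlk f (X ^ k) := by
  induction k with
  | zero => simpa [pow_zero] using (IsBlk.one (f := f))
  | succ k ih => rw [pow_succ]; exact ih.mul hX

lemma IsBlk.smul {X : Matrix (Fin m) (Fin m) ℝ} (hX : IsBlk f X) (c : ℝ) :
    IsBlk f (c • X) := by
  intro i j hij
  simp [hX i j hij]

lemma IsBlk.sum {s : Finset ℕ} {g : ℕ → Matrix (Fin m) (Fin m) ℝ}
    (h : ∀ k ∈ s, IsBlk f (g k)) : IsBlk f (∑ k ∈ s, g k) := by
  intro i j hij
  rw [Matrix.sum_apply]
  exact Finset.sum_eq_zero fun k hk => h k hk i j hij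

lemma isClosed_isBlk : IsClosed {X : Matrix (Fin m) (Fin m) ℝ | IsBlk f X} := by
  have : {X : Matrix (Fin m) (Fin m) ℝ | IsBlk f X}
      = ⋂ (i : Fin m) (j : Fin m) (_ : f i ≠ f j), {X | X i j = 0} := by
    ext X
    simp [IsBlk, Set.mem_iInter]
  rw [this]
  exact isClosed_iInter fun i => isClosed_iInter fun j => isClosed_iInter fun _ =>
    isClosed_eq (continuous_id.matrix_elem i j) continuous_const

lemma IsBlk.exp {X : Matrix (Fin m) (Fin m) ℝ} (hX : IsBlk f X) :
    IsBlk f (NormedSpace.exp X) := by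
  letI : NormedRing (Matrix (Fin m) (Fin m) ℝ) := Matrix.linftyOpNormedRing
  letI : NormedAlgebra ℝ (Matrix (Fin m) (Fin m) ℝ) := Matrix.linftyOpNormedAlgebra
  have hs : HasSum (fun k : ℕ => ((k.factorial : ℝ))⁻¹ • X ^ k) (NormedSpace.exp X) :=
    NormedSpace.exp_series_hasSum_exp' X
  refine isClosed_isBlk.mem_of_tendsto hs.tendsto_sum_nat
    (Filter.Eventually.of_forall fun N => ?_)
  exact IsBlk.sum fun k _ => (hX.pow k).smul _

variable (f) in
/-- restriction to the block of value `c`, as a linear map -/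
noncomputable def blkCLM (c : ℤ) :
    Matrix (Fin m) (Fin m) ℝ →L[ℝ] Matrix {i : Fin m // f i = c} {i : Fin m // f i = c} ℝ :=
  LinearMap.toContinuousLinearMap
    { toFun := fun X => X.submatrix (fun j : {i : Fin m // f i = c} => (j : Fin m))
        (fun j : {i : Fin m // f i = c} => (j : Fin m))
      map_add' := fun _ _ => rfl
      map_smul' := fun _ _ => rfl }

lemma blkCLM_apply (c : ℤ) (X : Matrix (Fin m) (Fin m) ℝ) :
    blkCLM f c X = X.submatrix (fun j : {i : Fin m // f i = c} => (j : Fin m))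
        (fun j : {i : Fin m // f i = c} => (j : Fin m)) := rfl

lemma blk_mul {X Y : Matrix (Fin m) (Fin m) ℝ} (hX : IsBlk f X) (c : ℤ) :
    blkCLM f c (X * Y) = blkCLM f c X * blkCLM f c Y := by
  ext i j
  simp only [blkCLM_apply, Matrix.submatrix_apply, Matrix.mul_apply]
  rw [← Finset.sum_subtype (Finset.univ.filter fun k : Fin m => f k = c)
    (fun k => by simp) (fun k => X (i : Fin m) k * Y k (j : Fin m))]
  refine (Finset.sum_filter_of_ne fun k _ hk => ?_).symm
  by_contra hc
  exact hk (by rw [hX (i : Fin m) k (i.prop.trans_ne (Ne.symm hc)), zero_mul])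

lemma blk_pow {X : Matrix (Fin m) (Fin m) ℝ} (hX : IsBlk f X) (c : ℤ) (k : ℕ) :
    blkCLM f c (X ^ k) = (blkCLM f c X) ^ k := by
  induction k with
  | zero =>
    ext i j
    simp [blkCLM_apply, Matrix.one_apply, Subtype.ext_iff]
  | succ k ih =>
    rw [pow_succ, blk_mul (hX.pow k) c, ih, pow_succ]

lemma blk_exp {X : Matrix (Fin m) (Fin m) ℝ} (hX : IsBlk f X) (c : ℤ) :
    blkCLM f c (NormedSpace.exp X) = NormedSpace.exp (blkCLM f c X) := by
  letI : NormedRing (Matrix (Fin m) (Fin m) ℝ) := Matrix.linftyOpNormedRing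
  letI : NormedAlgebra ℝ (Matrix (Fin m) (Fin m) ℝ) := Matrix.linftyOpNormedAlgebra
  letI : NormedRing (Matrix {i : Fin m // f i = c} {i : Fin m // f i = c} ℝ) :=
    Matrix.linftyOpNormedRing
  letI : NormedAlgebra ℝ (Matrix {i : Fin m // f i = c} {i : Fin m // f i = c} ℝ) :=
    Matrix.linftyOpNormedAlgebra
  have hs : HasSum (fun k : ℕ => ((k.factorial : ℝ))⁻¹ • X ^ k) (NormedSpace.exp X) :=
    NormedSpace.exp_series_hasSum_exp' X
  have h2 := hs.mapL (blkCLM f c)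
  have h3 : (fun k : ℕ => blkCLM f c (((k.factorial : ℝ))⁻¹ • X ^ k))
      = fun k : ℕ => ((k.factorial : ℝ))⁻¹ • (blkCLM f c X) ^ k := by
    funext k
    rw [map_smul, blk_pow hX]
  rw [h3] at h2
  exact h2.unique (NormedSpace.exp_series_hasSum_exp' _)

end Blocks


section Main

variable {n : ℕ} {q : ℤ} {e : Fin n → ℤ}

lemma exp_zpow (s : ℝ) (c : ℤ) : Real.exp s ^ c = Real.exp ((c:ℝ) * s) := by
  rw [← Real.rpow_intCast (Real.exp s) c, Real.rpow_def_of_pos (Real.exp_pos s),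
    Real.log_exp, mul_comm]

lemma comm_iff_isBlk (hq : q ≠ 0) (X : Matrix (Fin n) (Fin n) ℝ) :
    X * Matrix.diagonal (fun i => (e i : ℝ) / (q : ℝ))
      = Matrix.diagonal (fun i => (e i : ℝ) / (q : ℝ)) * X ↔ IsBlk e X := by
  have hq' : (q : ℝ) ≠ 0 := Int.cast_ne_zero.mpr hq
  constructor
  · intro h i j hij
    have h2 := congrFun (congrFun h i) j
    rw [Matrix.mul_diagonal, Matrix.diagonal_mul] at h2
    have hne : (e i : ℝ) ≠ (e j : ℝ) := by exact_mod_cast hij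
    have h3 : X i j * ((e j : ℝ) - (e i : ℝ)) = 0 := by
      field_simp at h2
      linarith
    rcases mul_eq_zero.mp h3 with h4 | h4
    · exact h4
    · exact absurd (by linarith [sub_eq_zero.mp h4] : (e i : ℝ) = (e j : ℝ)) hne
  · intro h
    ext i j
    rw [Matrix.mul_diagonal, Matrix.diagonal_mul]
    rcases eq_or_ne (e i) (e j) with hij | hij
    · rw [hij, mul_comm]
    · rw [h i j hij, zero_mul, mul_zero]

lemma blk_prod_eq (Y : Matrix (Fin n) (Fin n) ℝ) (hY : IsBlk e Y) :
    (∏ c ∈ Finset.univ.image (fun i => e i),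
      ((NormedSpace.exp Y).submatrix
        (fun j : {i : Fin n // e i = c} => (j : Fin n))
        (fun j : {i : Fin n // e i = c} => (j : Fin n))).det ^ c)
      = Real.exp (∑ i : Fin n, (e i : ℝ) * Y i i) := by
  simp only [← blkCLM_apply]
  rw [← Finset.sum_fiberwise_of_maps_to
    (fun i _ => Finset.mem_image_of_mem e (Finset.mem_univ i))
    (fun i => (e i : ℝ) * Y i i), Real.exp_sum]
  refine Finset.prod_congr rfl fun c _ => ?_
  rw [blk_exp hY c]
  have hdet : (NormedSpace.exp (blkCLM e c Y)).det
      = Real.exp ((blkCLM e c Y).trace) := by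
    have := det_exp_smul (blkCLM e c Y) 1
    simpa using this
  rw [hdet, exp_zpow]
  congr 1
  have htr : (blkCLM e c Y).trace = ∑ i : {i : Fin n // e i = c}, Y (i : Fin n) (i : Fin n) := by
    simp [Matrix.trace, Matrix.diag, blkCLM_apply]
  rw [htr, Finset.mul_sum]
  rw [show (∑ i : {i : Fin n // e i = c}, (c:ℝ) * Y (i : Fin n) (i : Fin n))
      = ∑ i : {i : Fin n // e i = c}, ((e (i : Fin n) : ℝ)) * Y (i : Fin n) (i : Fin n) from
    Finset.sum_congr rfl fun i _ => by rw [i.prop]]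
  rw [← Finset.sum_subtype (Finset.univ.filter fun k : Fin n => e k = c)
      (fun k => by simp) (fun i => (e i : ℝ) * Y i i)]

end Main

end CTZAux

attribute [local instance 100] LieRing.ofAssociativeRing

/-- the centralizer-trace-zero Lie subalgebra -/
def ctzLie {n : ℕ} (α : Matrix (Fin n) (Fin n) ℝ)
    (hd : ∀ X Y : Matrix (Fin n) (Fin n) ℝ, X * α = α * X → Y * α = α * Y →
      (X * Y * α).trace = (Y * X * α).trace) :
    LieSubalgebra ℝ (Matrix (Fin n) (Fin n) ℝ) where
  carrier := {X | X * α = α * X ∧ (X * α).trace = 0}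
  add_mem' := by
    rintro X Y ⟨hX1, hX2⟩ ⟨hY1, hY2⟩
    exact ⟨by rw [add_mul, mul_add, hX1, hY1],
      by rw [add_mul, Matrix.trace_add, hX2, hY2, add_zero]⟩
  zero_mem' := ⟨by rw [zero_mul, mul_zero], by rw [zero_mul, Matrix.trace_zero]⟩
  smul_mem' := by
    rintro c X ⟨hX1, hX2⟩
    exact ⟨by rw [smul_mul_assoc, mul_smul_comm, hX1],
      by rw [smul_mul_assoc, Matrix.trace_smul, hX2, smul_zero]⟩
  lie_mem' := by
    rintro X Y ⟨hX1, hX2⟩ ⟨hY1, hY2⟩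
    rw [Ring.lie_def]
    have h1 : X * Y * α = α * (X * Y) := by
      rw [mul_assoc, hY1, ← mul_assoc, hX1, mul_assoc]
    have h2 : Y * X * α = α * (Y * X) := by
      rw [mul_assoc, hX1, ← mul_assoc, hY1, mul_assoc]
    exact ⟨by rw [sub_mul, mul_sub, h1, h2],
      by rw [sub_mul, Matrix.trace_sub, hd X Y hX1 hY1, sub_self]⟩


end




attribute [local instance 100] LieRing.ofAssociativeRing

open NormedSpace in
/-- For a diagonal `α ∈ gl(n,ℝ)` with rational entries `e i / q` (weakly increasing),
the set `{X : [X,α]=0, tr(Xα)=0}` is a Lie subalgebra of `gl(n,ℝ)`, and it is the Lie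
algebra of the group `{g ∈ GL(n,ℝ) : gα=αg, ∏ det(g_i)^{q a_i} = 1}` (blocks `g_i`
given by the eigenspaces of `α`), in the sense that `X` lies in the set iff the whole
one-parameter group `exp(tX)` lies in that group. -/
theorem centralizer_trace_zero_is_lie_algebra_of_group (n : ℕ) (q : ℤ) (hq : q ≠ 0)
    (e : Fin n → ℤ) (α : Matrix (Fin n) (Fin n) ℝ)
    (hα : α = Matrix.diagonal fun i => (e i : ℝ) / (q : ℝ))
    (hmono : Monotone fun i => α i i) :
    (∃ Lalg : LieSubalgebra ℝ (Matrix (Fin n) (Fin n) ℝ),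
        (Lalg : Set (Matrix (Fin n) (Fin n) ℝ))
          = {X | X * α = α * X ∧ (X * α).trace = 0}) ∧
    ∀ X : Matrix (Fin n) (Fin n) ℝ,
      (X * α = α * X ∧ (X * α).trace = 0) ↔
        ∀ t : ℝ,
          exp (t • X) * α = α * exp (t • X) ∧
          ∏ c ∈ Finset.univ.image (fun i => e i),
            ((exp (t • X)).submatrix
              (fun j : {i : Fin n // e i = c} => (j : Fin n))
              (fun j : {i : Fin n // e i = c} => (j : Fin n))).det ^ c = 1 := by
  have hq' : (q : ℝ) ≠ 0 := Int.cast_ne_zero.mpr hq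
  have htr : ∀ X : Matrix (Fin n) (Fin n) ℝ,
      (X * α).trace = (∑ i : Fin n, (e i : ℝ) * X i i) / q := by
    intro X
    subst hα
    simp only [Matrix.trace, Matrix.diag, Matrix.mul_diagonal]
    rw [Finset.sum_div]
    exact Finset.sum_congr rfl fun i _ => by ring
  have hcomm : ∀ X : Matrix (Fin n) (Fin n) ℝ, X * α = α * X ↔ CTZAux.IsBlk e X := by
    intro X; subst hα; exact CTZAux.comm_iff_isBlk hq X
  constructor
  · refine ⟨ctzLie α fun X Y hX1 hY1 => ?_, rfl⟩
    rw [mul_assoc X Y α, Matrix.trace_mul_comm X (Y * α), mul_assoc Y α X, ← hX1,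
      ← mul_assoc]
  · intro X
    constructor
    · rintro ⟨hc, ht⟩ t
      have hB : CTZAux.IsBlk e X := (hcomm X).mp hc
      have hBt : CTZAux.IsBlk e (t • X) := hB.smul t
      refine ⟨(hcomm _).mpr hBt.exp, ?_⟩
      rw [CTZAux.blk_prod_eq (t • X) hBt]
      have hsum0 : ∑ i : Fin n, (e i : ℝ) * X i i = 0 := by
        have := htr X
        rw [ht] at this
        field_simp at this
        linarith [this]
      have hs : ∑ i : Fin n, (e i : ℝ) * (t • X) i i
          = t * ∑ i : Fin n, (e i : ℝ) * X i i := by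
        rw [Finset.mul_sum]
        exact Finset.sum_congr rfl fun i _ => by
          simp [Matrix.smul_apply]; ring
      rw [hs, hsum0, mul_zero, Real.exp_zero]
    · intro h
      have hB : CTZAux.IsBlk e X := by
        intro i j hij
        have hz : ∀ t : ℝ, exp (t • X) i j = 0 := fun t =>
          ((hcomm _).mp (h t).1) i j hij
        have hd := CTZAux.entry_hasDerivAt X i j
        rw [show (fun t : ℝ => exp (t • X) i j) = fun _ => (0:ℝ) from funext hz] at hd
        exact (hd.unique (hasDerivAt_const 0 0)).symm ▸ rfl
      refine ⟨(hcomm X).mpr hB, ?_⟩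
      have h1 := (h 1).2
      rw [CTZAux.blk_prod_eq ((1:ℝ) • X) (hB.smul 1), Real.exp_eq_one_iff] at h1
      rw [one_smul] at h1
      rw [htr X, h1, zero_div]
end

section
/- Let m : V∖{0} → symm(n) be the moment map as above and F(v) = ‖m(v)‖². Then v ∈ V∖{0} is a critical point of F restricted to the sphere of radius ‖v‖ if and only if π(m(v))(v) = r v for some r ∈ ℝ; i.e., v is an eigenvector of the symmetric operator π(m(v)). -/
open scoped RealInnerProductSpace Matrix
open Matrix

section Aux

variable {V : Type*} [NormedAddCommGroup V] [InnerProductSpace ℝ V]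

private lemma aux_span (v x : V) (hv : v ≠ 0)
    (h : ∀ w : V, ⟪v, w⟫ = 0 → ⟪x, w⟫ = 0) : ∃ r : ℝ, x = r • v := by
  set r : ℝ := ⟪v, x⟫ / ‖v‖ ^ 2 with hr
  refine ⟨r, ?_⟩
  have hn : (‖v‖ : ℝ) ≠ 0 := norm_ne_zero_iff.mpr hv
  set w : V := x - r • v with hw
  have hvw : ⟪v, w⟫ = 0 := by
    simp only [hw, inner_sub_right, inner_smul_right]
    rw [real_inner_self_eq_norm_sq, hr]
    field_simp
    ring
  have hxw := h w hvw
  have h2 : ⟪w, w⟫ = 0 := by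
    have : ⟪x, w⟫ - r * ⟪v, w⟫ = 0 := by rw [hxw, hvw]; ring
    rw [hw] at this ⊢
    rw [inner_sub_left, real_inner_smul_left]
    exact this
  exact sub_eq_zero.mp (inner_self_eq_zero.mp h2)

private lemma aux_quad_deriv (T : V →L[ℝ] V) (hT : (T : V →ₗ[ℝ] V).IsSymmetric) (v : V) :
    HasFDerivAt (fun u => ⟪T u, u⟫) ((2:ℝ) • (innerSL ℝ (T v))) v := by
  have h := hT.hasStrictFDerivAt_reApplyInnerSelf v
  have heq : (fun u => ⟪T u, u⟫) = T.reApplyInnerSelf := by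
    ext u; simp [ContinuousLinearMap.reApplyInnerSelf]
  rw [heq]
  convert h.hasFDerivAt using 1
  ext w; simp

end Aux

private lemma aux_sum_basis (n : ℕ) (A : Matrix (Fin n) (Fin n) ℝ) :
    ∑ p : Fin n × Fin n, A p.1 p.2 • (Matrix.single p.1 p.2 (1:ℝ) + Matrix.single p.2 p.1 1)
      = A + Aᵀ := by
  ext k l
  simp only [Matrix.sum_apply, Matrix.smul_apply, Matrix.add_apply, Matrix.single,
    Matrix.of_apply, smul_eq_mul, mul_add, Matrix.transpose_apply]
  rw [Finset.sum_add_distrib]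
  congr 1
  · rw [Finset.sum_eq_single (k, l)]
    · simp
    · rintro ⟨a, b⟩ - hab
      simp only [ite_and, mul_ite, mul_one, mul_zero]
      split_ifs with h1 h2 <;> simp_all
    · simp
  · rw [Finset.sum_eq_single (l, k)]
    · simp
    · rintro ⟨a, b⟩ - hab
      simp only [ite_and, mul_ite, mul_one, mul_zero]
      split_ifs with h1 h2 <;> simp_all
    · simp

private lemma aux_transpose_std (n : ℕ) (i j : Fin n) :
    (Matrix.single i j (1:ℝ))ᵀ = Matrix.single j i 1 := by
  ext a b; simp [Matrix.single, Matrix.transpose_apply, and_comm]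

private lemma aux_trace_std (n : ℕ) (A : Matrix (Fin n) (Fin n) ℝ) (i j : Fin n) :
    (A * (Matrix.single i j (1:ℝ))ᵀ).trace = A i j := by
  simp [Matrix.trace, Matrix.mul_apply, Matrix.single, Matrix.diag, ite_and, Finset.sum_ite_eq]

/-- For the moment map `m` and `F(v) = ‖m(v)‖²`, a nonzero `v` is a critical point of
`F` restricted to the sphere of radius `‖v‖` if and only if `v` is an eigenvector of
the symmetric operator `π(m(v))`, i.e. `π(m(v))v = r v` for some `r ∈ ℝ`. -/
theorem critical_point_iff_eigenvector (n : ℕ)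
    {V : Type*} [NormedAddCommGroup V] [InnerProductSpace ℝ V] [FiniteDimensional ℝ V]
    (π : Matrix (Fin n) (Fin n) ℝ →ₗ[ℝ] V →ₗ[ℝ] V)
    (hπadj : ∀ X : Matrix (Fin n) (Fin n) ℝ, LinearMap.adjoint (π X) = π Xᵀ)
    (m : V → Matrix (Fin n) (Fin n) ℝ)
    (hmsym : ∀ v, (m v)ᵀ = m v)
    (hm : ∀ v : V, v ≠ 0 → ∀ α : Matrix (Fin n) (Fin n) ℝ, αᵀ = α →
      (m v * αᵀ).trace = ⟪π α v, v⟫ / ‖v‖ ^ 2)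
    (v : V) (hv : v ≠ 0) :
    (∀ w : V, ⟪v, w⟫ = 0 →
        fderiv ℝ (fun u : V => ((m u) * (m u)ᵀ).trace) v w = 0) ↔
      ∃ r : ℝ, (π (m v)) v = r • v := by
  classical
  -- notation
  set β : Fin n × Fin n → Matrix (Fin n) (Fin n) ℝ :=
    fun p => Matrix.single p.1 p.2 1 + Matrix.single p.2 p.1 1 with hβ
  have hβsym : ∀ p, (β p)ᵀ = β p := by
    intro p
    simp [hβ, Matrix.transpose_add, aux_transpose_std, add_comm]
  -- symmetry of π applied to symmetric matrices
  have hsymm : ∀ X : Matrix (Fin n) (Fin n) ℝ, Xᵀ = X → (π X).IsSymmetric := by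
    intro X hX x y
    rw [show π X = LinearMap.adjoint (π X) by rw [hπadj, hX]]
    rw [LinearMap.adjoint_inner_left]
    rw [hπadj, hX]
  -- continuous linear map version
  set T : Fin n × Fin n → V →L[ℝ] V :=
    fun p => LinearMap.toContinuousLinearMap (π (β p)) with hT
  have hTapp : ∀ p u, T p u = π (β p) u := by intro p u; simp [hT]
  -- entry formula for m
  have hentry : ∀ u : V, u ≠ 0 → ∀ p : Fin n × Fin n,
      m u p.1 p.2 = ⟪π (β p) u, u⟫ * (2 * ⟪u, u⟫)⁻¹ := by
    intro u hu p
    have h1 := hm u hu (β p) (hβsym p)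
    have h2 : (m u * (β p)ᵀ).trace = 2 * m u p.1 p.2 := by
      rw [hβsym p, hβ]
      simp only [mul_add, Matrix.trace_add]
      have e1 : (m u * Matrix.single p.1 p.2 (1:ℝ)).trace = m u p.2 p.1 := by
        have := aux_trace_std n (m u) p.2 p.1
        simpa [aux_transpose_std] using this
      have e2 : (m u * Matrix.single p.2 p.1 (1:ℝ)).trace = m u p.1 p.2 := by
        have := aux_trace_std n (m u) p.1 p.2
        simpa [aux_transpose_std] using this
      have e3 : m u p.2 p.1 = m u p.1 p.2 := by
        simpa using (congrFun (congrFun (hmsym u) p.2) p.1).symm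
      rw [e1, e2, e3]; ring
    have hnu : ⟪u, u⟫ ≠ 0 := by
      rw [real_inner_self_eq_norm_sq]
      exact pow_ne_zero 2 (norm_ne_zero_iff.mpr hu)
    rw [h2, ← real_inner_self_eq_norm_sq] at h1
    field_simp at h1 ⊢
    linarith [h1]
  -- scalar quantities at v
  have hvv : ⟪v, v⟫ ≠ 0 := by
    rw [real_inner_self_eq_norm_sq]
    exact pow_ne_zero 2 (norm_ne_zero_iff.mpr hv)
  have h2vv : (2 : ℝ) * ⟪v, v⟫ ≠ 0 := by simpa using hvv
  -- derivative building blocks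
  set g : Fin n × Fin n → V → ℝ := fun p u => ⟪π (β p) u, u⟫ with hg
  set h2 : V → ℝ := fun u => 2 * ⟪u, u⟫ with hh2
  have hgderiv : ∀ p, HasFDerivAt (g p) ((2:ℝ) • innerSL ℝ (π (β p) v)) v := by
    intro p
    have hts : ((T p : V →L[ℝ] V) : V →ₗ[ℝ] V).IsSymmetric := by
      rw [show ((T p : V →L[ℝ] V) : V →ₗ[ℝ] V) = π (β p) from
        LinearMap.coe_toContinuousLinearMap _]
      exact hsymm (β p) (hβsym p)
    have := aux_quad_deriv (T p) hts v
    have heq : (fun u => ⟪T p u, u⟫) = g p := by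
      ext u; simp only [hTapp p u, hg]
    rw [heq, hTapp] at this
    exact this
  have hidsymm : ((ContinuousLinearMap.id ℝ V : V →L[ℝ] V) : V →ₗ[ℝ] V).IsSymmetric := by
    intro x y; simp
  have hinner : HasFDerivAt (fun u : V => ⟪u, u⟫) ((2:ℝ) • innerSL ℝ v) v := by
    have := aux_quad_deriv (ContinuousLinearMap.id ℝ V) hidsymm v
    simpa using this
  have hh2deriv : HasFDerivAt h2 ((2:ℝ) • ((2:ℝ) • innerSL ℝ v)) v :=
    hinner.const_mul 2
  -- derivative of inverse of h2
  have hinvderiv : HasFDerivAt (fun u => (h2 u)⁻¹)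
      ((-((h2 v) ^ 2)⁻¹) • ((2:ℝ) • ((2:ℝ) • innerSL ℝ v))) v := by
    have hne : h2 v ≠ 0 := h2vv
    exact (hasDerivAt_inv hne).comp_hasFDerivAt v hh2deriv
  -- quotient derivative
  set q : Fin n × Fin n → V → ℝ := fun p u => g p u * (h2 u)⁻¹ with hq
  set qd : Fin n × Fin n → (V →L[ℝ] ℝ) := fun p =>
    g p v • ((-((h2 v) ^ 2)⁻¹) • ((2:ℝ) • ((2:ℝ) • innerSL ℝ v))) +
      (h2 v)⁻¹ • ((2:ℝ) • innerSL ℝ (π (β p) v)) with hqd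
  have hqderiv : ∀ p, HasFDerivAt (q p) (qd p) v := fun p =>
    (hgderiv p).mul hinvderiv
  -- square derivative
  set D : Fin n × Fin n → (V →L[ℝ] ℝ) := fun p => q p v • qd p + q p v • qd p with hD
  have hsqderiv : ∀ p, HasFDerivAt (fun u => q p u * q p u) (D p) v := fun p =>
    (hqderiv p).mul (hqderiv p)
  set L : V →L[ℝ] ℝ := ∑ p : Fin n × Fin n, D p with hL
  have hGderiv : HasFDerivAt (fun u => ∑ p : Fin n × Fin n, q p u * q p u) L v :=
    HasFDerivAt.fun_sum (fun p _ => hsqderiv p)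
  -- the statement function agrees with G near v
  have heventually : (fun u : V => ((m u) * (m u)ᵀ).trace)
      =ᶠ[nhds v] (fun u => ∑ p : Fin n × Fin n, q p u * q p u) := by
    filter_upwards [compl_singleton_mem_nhds hv] with u hu
    have hu' : u ≠ 0 := hu
    have htr : ((m u) * (m u)ᵀ).trace = ∑ p : Fin n × Fin n, m u p.1 p.2 * m u p.1 p.2 := by
      rw [Fintype.sum_prod_type]
      simp [Matrix.trace, Matrix.diag, Matrix.mul_apply, Matrix.transpose_apply]
    rw [htr]
    refine Finset.sum_congr rfl fun p _ => ?_
    rw [hentry u hu' p]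
  have hFderiv : HasFDerivAt (fun u : V => ((m u) * (m u)ᵀ).trace) L v :=
    hGderiv.congr_of_eventuallyEq heventually
  -- evaluate L on w orthogonal to v
  have hLw : ∀ w : V, ⟪v, w⟫ = 0 →
      L w = (4 * (⟪v, v⟫)⁻¹) * ⟪π (m v) v, w⟫ := by
    intro w hw
    have hqdw : ∀ p, qd p w = (h2 v)⁻¹ * (2 * ⟪π (β p) v, w⟫) := by
      intro p
      simp [hqd, hw]
    have hDw : ∀ p, D p w = 2 * (q p v * ((h2 v)⁻¹ * (2 * ⟪π (β p) v, w⟫))) := by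
      intro p
      simp only [hD, ContinuousLinearMap.add_apply, ContinuousLinearMap.smul_apply,
        smul_eq_mul, hqdw]
      ring
    have hqv : ∀ p, q p v = m v p.1 p.2 := by
      intro p
      rw [hentry v hv p]
    have hsum : ∑ p : Fin n × Fin n, m v p.1 p.2 * ⟪π (β p) v, w⟫
        = 2 * ⟪π (m v) v, w⟫ := by
      have key : ∑ p : Fin n × Fin n, m v p.1 p.2 • β p = m v + (m v)ᵀ :=
        aux_sum_basis n (m v)
      have : ⟪π (∑ p : Fin n × Fin n, m v p.1 p.2 • β p) v, w⟫
          = ∑ p : Fin n × Fin n, m v p.1 p.2 * ⟪π (β p) v, w⟫ := by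
        rw [map_sum]
        simp only [LinearMap.coe_sum, Finset.sum_apply, sum_inner]
        refine Finset.sum_congr rfl fun p _ => ?_
        rw [_root_.map_smul, LinearMap.smul_apply, real_inner_smul_left]
      rw [key] at this
      rw [← this, hmsym, map_add, LinearMap.add_apply, inner_add_left]
      ring
    calc L w = ∑ p : Fin n × Fin n, D p w := by
          simp [hL, ContinuousLinearMap.sum_apply]
      _ = ∑ p : Fin n × Fin n, 2 * (h2 v)⁻¹ * 2 * (m v p.1 p.2 * ⟪π (β p) v, w⟫) := by
          refine Finset.sum_congr rfl fun p _ => ?_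
          rw [hDw p, hqv p]; ring
      _ = 2 * (h2 v)⁻¹ * 2 * (2 * ⟪π (m v) v, w⟫) := by
          rw [← Finset.mul_sum, hsum]
      _ = (4 * (⟪v, v⟫)⁻¹) * ⟪π (m v) v, w⟫ := by
          simp only [hh2]
          rw [mul_inv]
          field_simp
          ring
  have hfd : ∀ w, fderiv ℝ (fun u : V => ((m u) * (m u)ᵀ).trace) v w = L w := by
    intro w; rw [hFderiv.fderiv]
  constructor
  · intro hcrit
    apply aux_span v (π (m v) v) hv
    intro w hw
    have := hcrit w hw
    rw [hfd w, hLw w hw] at this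
    have h4 : (4 : ℝ) * (⟪v, v⟫)⁻¹ ≠ 0 := by positivity
    exact (mul_eq_zero.mp this).resolve_left h4
  · rintro ⟨r, hr⟩ w hw
    rw [hfd w, hLw w hw, hr, real_inner_smul_left, hw]
    ring
end
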